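/- Let G be a finite group, \varphi an automorphism of G whose order is coprime to |G|, and N a \varphi-invariant normal subgroup. Then the fixed points of the induced automorphism on G/N are images of fixed points in G: C_{G/N}(\varphi) = C_G(\varphi) N / N. -/

import Mathlib

open Subgroup

universe u

/-- Counting lemma: an automorphism of `p`-power order acting on a coset of an
invariant subgroup of size prime to `p` has a fixed point in that coset. -/
lemma fix_in_coset {G : Type u} [Group G] [Fintype G] (τ : G ≃* G) (p : ℕ)
    (hp : p.Prime) (hτ : τ ^ p = 1) (hpG : ¬ p ∣ Fintype.card G)
    (N : Subgroup G) (hN : ∀ n ∈ N, τ n ∈ N) (g : G) (hg : τ g * g⁻¹ ∈ N) :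
    ∃ k : G, τ k = k ∧ k * g⁻¹ ∈ N := by
  classical
  have hpow : ∀ (ρ : G ≃* G) (n : ℕ) (x : G), (ρ ^ (n + 1)) x = (ρ ^ n) (ρ x) := by
    intro ρ n x
    rw [pow_succ, MulAut.mul_apply]
  -- the coset `N g` as a subtype
  let S := {x : G // x * g⁻¹ ∈ N}
  have hSmap : ∀ x : G, x * g⁻¹ ∈ N → τ x * g⁻¹ ∈ N := by
    intro x hx
    have h1 : τ (x * g⁻¹) ∈ N := hN _ hx
    have : τ x * g⁻¹ = τ (x * g⁻¹) * (τ g * g⁻¹) := by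
      simp [map_mul, mul_assoc]
    rw [this]
    exact N.mul_mem h1 hg
  let f : S → S := fun x => ⟨τ x.1, hSmap x.1 x.2⟩
  have hfiter : ∀ (n : ℕ) (x : S), (f^[n] x).1 = (τ ^ n : G ≃* G) x.1 := by
    intro n
    induction n with
    | zero => intro x; simp
    | succ n ih =>
      intro x
      rw [Function.iterate_succ_apply, hpow]
      exact ih _
  have hfp : f^[p] = id := by
    funext x
    apply Subtype.ext
    rw [hfiter, hτ]
    rfl
  have hplt : 0 < p := hp.pos
  -- f is bijective, with inverse f^[p-1]
  have hpsucc : p - 1 + 1 = p := Nat.succ_pred_eq_of_pos hplt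
  have hinv : Function.LeftInverse (f^[p-1]) f ∧ Function.RightInverse (f^[p-1]) f := by
    constructor
    · intro x
      have h1 : f^[p-1] (f x) = f^[p-1+1] x := (Function.iterate_succ_apply f (p-1) x).symm
      rw [h1, hpsucc, hfp]; rfl
    · intro x
      have h1 : f (f^[p-1] x) = f^[p-1+1] x := (Function.iterate_succ_apply' f (p-1) x).symm
      rw [h1, hpsucc, hfp]; rfl
  let σ : Equiv.Perm S := ⟨f, f^[p-1], hinv.1, hinv.2⟩
  have hσp : σ ^ p = 1 := by
    ext x
    have h1 : ∀ (n : ℕ) (x : S), (σ ^ n) x = f^[n] x := by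
      intro n
      induction n with
      | zero => intro x; rfl
      | succ n ih =>
        intro x
        rw [pow_succ, Equiv.Perm.mul_apply, ih]
        exact (Function.iterate_succ_apply f n x).symm
    rw [h1, hfp]
    rfl
  -- the cyclic group generated by σ is a p-group
  have hPG : IsPGroup p (Subgroup.zpowers σ) := by
    intro x
    refine ⟨1, ?_⟩
    obtain ⟨n, hn⟩ := x.2
    apply Subtype.ext
    have : (x : Equiv.Perm S) ^ p = 1 := by
      rw [← hn, ← zpow_natCast, ← zpow_mul, mul_comm, zpow_mul, zpow_natCast, hσp, one_zpow]
    simpa [pow_one] using this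
  have : Fact p.Prime := ⟨hp⟩
  -- S is nonempty of cardinality card N, not divisible by p
  have hcard : Nat.card S = Nat.card N := by
    apply Nat.card_congr
    exact ⟨fun x => ⟨x.1 * g⁻¹, x.2⟩, fun n => ⟨n.1 * g, by simp [n.2]⟩,
      fun x => by simp, fun n => by simp⟩
  have hpS : ¬ p ∣ Nat.card S := by
    rw [hcard]
    intro hd
    exact hpG (hd.trans (by
      have := Subgroup.card_subgroup_dvd_card N
      simpa [Nat.card_eq_fintype_card] using this))
  obtain ⟨a, ha⟩ := hPG.nonempty_fixed_point_of_prime_not_dvd_card S hpS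
  refine ⟨a.1, ?_, a.2⟩
  have := ha ⟨σ, Subgroup.mem_zpowers σ⟩
  have h2 : σ a = a := this
  exact congrArg Subtype.val h2

/-- Main auxiliary lemma: coprime covering, by strong induction on the order
of the automorphism. -/
lemma covering_aux : ∀ (m : ℕ), ∀ {G : Type u} [Group G] [Fintype G] (φ : G ≃* G),
    orderOf φ = m → Nat.Coprime m (Fintype.card G) →
    ∀ (N : Subgroup G), (∀ n ∈ N, φ n ∈ N) →
    ∀ g : G, φ g * g⁻¹ ∈ N → ∃ k : G, φ k = k ∧ k * g⁻¹ ∈ N := by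
  intro m
  induction m using Nat.strong_induction_on with
  | _ m IH =>
  intro G _ _ φ hord hcop N hN g hg
  classical
  rcases Nat.eq_zero_or_pos m with hm0 | hmpos
  · -- m = 0 : coprime 0 card → card = 1, trivial group
    subst hm0
    have h1 : Fintype.card G = 1 := (Nat.coprime_zero_left _).mp hcop
    have : Subsingleton G := Fintype.card_le_one_iff_subsingleton.mp (le_of_eq h1)
    exact ⟨g, Subsingleton.elim _ _, by simpa using N.one_mem⟩
  rcases eq_or_lt_of_le (show 1 ≤ m from hmpos) with hm1 | hm2
  · -- m = 1 : φ = 1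
    have hφ1 : φ = 1 := orderOf_eq_one_iff.mp (hord.trans hm1.symm)
    refine ⟨g, ?_, by simpa using N.one_mem⟩
    rw [hφ1]; rfl
  · -- m ≥ 2
    set p := m.minFac with hpdef
    have hp : p.Prime := Nat.minFac_prime (by omega)
    have hpdvd : p ∣ m := Nat.minFac_dvd m
    have hppos : 0 < p := hp.pos
    have hdiv : m / p * p = m := Nat.div_mul_cancel hpdvd
    -- τ = φ ^ (m/p) has τ^p = 1
    set τ : G ≃* G := φ ^ (m / p) with hτdef
    have hτp : τ ^ p = 1 := by
      rw [hτdef, ← pow_mul, hdiv, ← hord, pow_orderOf_eq_one]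
    have hpG : ¬ p ∣ Fintype.card G :=
      (Nat.Prime.coprime_iff_not_dvd hp).mp (hcop.coprime_dvd_left hpdvd)
    -- powers of φ preserve N
    have hNpow : ∀ (i : ℕ) (n : G), n ∈ N → (φ ^ i) n ∈ N := by
      intro i
      induction i with
      | zero => intro n hn; simpa using hn
      | succ i ih =>
        intro n hn
        rw [pow_succ, MulAut.mul_apply]
        exact ih _ (hN n hn)
    have hτN : ∀ n ∈ N, τ n ∈ N := fun n hn => hNpow (m / p) n hn
    -- powers of φ move g within its coset
    have hgpow : ∀ i : ℕ, (φ ^ i) g * g⁻¹ ∈ N := by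
      intro i
      induction i with
      | zero => simpa using N.one_mem
      | succ i ih =>
        have key : (φ ^ (i+1)) g * g⁻¹
            = (φ ^ i) (φ g * g⁻¹) * ((φ ^ i) g * g⁻¹) := by
          rw [pow_succ, MulAut.mul_apply, map_mul, map_inv]
          group
        rw [key]
        exact N.mul_mem (hNpow i _ hg) ih
    have hτg : τ g * g⁻¹ ∈ N := hgpow (m / p)
    -- fixed point of τ in the coset
    obtain ⟨k₀, hk₀fix, hk₀g⟩ := fix_in_coset τ p hp hτp hpG N hτN g hτg
    -- K = C_G(τ)
    let K : Subgroup G :=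
      { carrier := {x | τ x = x}
        one_mem' := map_one τ
        mul_mem' := fun {a b} ha hb => by
          simp only [Set.mem_setOf_eq, map_mul] at *
          rw [ha, hb]
        inv_mem' := fun {a} ha => by
          simp only [Set.mem_setOf_eq, map_inv] at *
          rw [ha] }
    have hcomm : ∀ x : G, φ (τ x) = τ (φ x) := by
      intro x
      have h := (Commute.refl φ).pow_right (m / p)
      have := congrArg (fun (ρ : G ≃* G) => ρ x) h.eq
      simpa [MulAut.mul_apply] using this
    have hKmem : ∀ x : G, x ∈ K ↔ τ x = x := fun _ => Iff.rfl
    have hφK : ∀ x : G, x ∈ K → φ x ∈ K := by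
      intro x hx
      show τ (φ x) = φ x
      rw [← hcomm, hx]
    have hφsymmK : ∀ x : G, x ∈ K → φ.symm x ∈ K := by
      intro x hx
      show τ (φ.symm x) = φ.symm x
      have := hcomm (φ.symm x)
      rw [MulEquiv.apply_symm_apply] at this
      have h2 : φ.symm (φ (τ (φ.symm x))) = φ.symm (τ x) := by rw [this]
      rw [MulEquiv.symm_apply_apply] at h2
      rw [h2, hx]
    -- the restricted automorphism
    let φK : K ≃* K :=
      { toFun := fun x => ⟨φ x.1, hφK x.1 x.2⟩
        invFun := fun x => ⟨φ.symm x.1, hφsymmK x.1 x.2⟩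
        left_inv := fun x => by simp
        right_inv := fun x => by simp
        map_mul' := fun x y => by simp }
    have hφKpow : ∀ (i : ℕ) (x : K), (((φK ^ i) x : K) : G) = (φ ^ i) (x : G) := by
      intro i
      induction i with
      | zero => intro x; rfl
      | succ i ih =>
        intro x
        rw [pow_succ, MulAut.mul_apply, pow_succ, MulAut.mul_apply, ih]
        rfl
    have hφKord : orderOf φK ∣ m / p := by
      apply orderOf_dvd_of_pow_eq_one
      ext x
      rw [hφKpow (m / p) x]
      exact x.2
    have hmp_lt : m / p < m := Nat.div_lt_self (by omega) hp.one_lt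
    have hmppos : 0 < m / p := Nat.div_pos (Nat.minFac_le (by omega)) hppos
    have hordlt : orderOf φK < m := lt_of_le_of_lt (Nat.le_of_dvd hmppos hφKord) hmp_lt
    have hcardK : Fintype.card K ∣ Fintype.card G := by
      simpa [Nat.card_eq_fintype_card] using Subgroup.card_subgroup_dvd_card K
    have hcopK : Nat.Coprime (orderOf φK) (Fintype.card K) :=
      (hcop.coprime_dvd_left (hφKord.trans (Nat.div_dvd_of_dvd hpdvd))).coprime_dvd_right hcardK
    -- set up data in K
    have hk₀K : k₀ ∈ K := hk₀fix
    let g' : K := ⟨k₀, hk₀K⟩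
    let N' : Subgroup K := N.subgroupOf K
    have hN' : ∀ n ∈ N', φK n ∈ N' := by
      intro n hn
      rw [Subgroup.mem_subgroupOf] at hn ⊢
      exact hN _ hn
    have hg' : φK g' * g'⁻¹ ∈ N' := by
      rw [Subgroup.mem_subgroupOf]
      show φ k₀ * k₀⁻¹ ∈ N
      have heq : φ k₀ * k₀⁻¹ = (φ (k₀ * g⁻¹)) * (φ g * g⁻¹) * (k₀ * g⁻¹)⁻¹ := by
        rw [map_mul, map_inv]
        group
      rw [heq]
      exact N.mul_mem (N.mul_mem (hN _ hk₀g) hg) (N.inv_mem hk₀g)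
    obtain ⟨k', hk'fix, hk'g'⟩ := IH (orderOf φK) hordlt φK rfl hcopK N' hN' g' hg'
    refine ⟨(k' : G), ?_, ?_⟩
    · exact congrArg Subtype.val hk'fix
    · have h1 : (k' : G) * k₀⁻¹ ∈ N := by
        rw [Subgroup.mem_subgroupOf] at hk'g'
        exact hk'g'
      have heq : (k' : G) * g⁻¹ = ((k' : G) * k₀⁻¹) * (k₀ * g⁻¹) := by group
      rw [heq]
      exact N.mul_mem h1 hk₀g


/-- Coprime action covering property: if `φ` is an automorphism of a finite
group `G` of order coprime to `|G|`, `N` is a `φ`-invariant normal subgroup and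
`ψ` is the induced automorphism of `G/N`, then the fixed points of `ψ` are
exactly the images of fixed points of `φ`: `C_{G/N}(φ) = C_G(φ)N/N`. -/
theorem stmt11 {G : Type*} [Group G] [Fintype G] (φ : G ≃* G)
    (hcop : Nat.Coprime (orderOf φ) (Fintype.card G))
    (N : Subgroup G) [N.Normal] (hN : ∀ g ∈ N, φ g ∈ N)
    (ψ : G ⧸ N ≃* G ⧸ N)
    (hψ : ∀ g : G, ψ (QuotientGroup.mk g) = QuotientGroup.mk (φ g)) :
    ∀ x : G ⧸ N, ψ x = x ↔ ∃ g : G, φ g = g ∧ QuotientGroup.mk g = x := by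
  intro x
  constructor
  · intro hx
    obtain ⟨g, rfl⟩ := QuotientGroup.mk_surjective x
    rw [hψ g] at hx
    have h1 : (φ g)⁻¹ * g ∈ N := QuotientGroup.eq.mp hx
    have h2 : φ g * g⁻¹ ∈ N := by
      have h3 : g⁻¹ * φ g ∈ N := by
        have := N.inv_mem h1
        simpa using this
      have heq : φ g * g⁻¹ = φ g * (g⁻¹ * φ g) * (φ g)⁻¹ := by group
      rw [heq]
      exact Subgroup.Normal.conj_mem ‹N.Normal› _ h3 (φ g)
    obtain ⟨k, hk, hkg⟩ := covering_aux (orderOf φ) φ rfl hcop N hN g h2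
    refine ⟨k, hk, ?_⟩
    rw [QuotientGroup.eq]
    have h4 : g * k⁻¹ ∈ N := by
      have := N.inv_mem hkg
      simpa using this
    have heq : k⁻¹ * g = k⁻¹ * (g * k⁻¹) * (k⁻¹)⁻¹ := by group
    rw [heq]
    exact Subgroup.Normal.conj_mem ‹N.Normal› _ h4 k⁻¹
  · rintro ⟨g, hfix, rfl⟩
    rw [hψ g, hfix]
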